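/- If a and b are positive dyadic rationals in canonical form with a^L < b < a (as rationals), then l(a^L) < l(b), where l denotes left-length. -/

import Mathlib

universe u

namespace SetTheory

/-- Pre-game, as in the former `Mathlib.SetTheory.Game.PGame` (removed from Mathlib). -/
inductive PGame : Type (u + 1)
  | mk : ∀ α β : Type u, (α → PGame) → (β → PGame) → PGame

namespace PGame

def LeftMoves : PGame → Type u
  | mk l _ _ _ => l

def RightMoves : PGame → Type u
  | mk _ r _ _ => r

def moveLeft : ∀ g : PGame, LeftMoves g → PGame
  | mk _l _ L _ => L

def moveRight : ∀ g : PGame, RightMoves g → PGame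
  | mk _ _r _ R => R

inductive IsOption : PGame → PGame → Prop
  | moveLeft {x : PGame} (i : x.LeftMoves) : IsOption (x.moveLeft i) x
  | moveRight {x : PGame} (i : x.RightMoves) : IsOption (x.moveRight i) x

instance : Zero PGame :=
  ⟨⟨PEmpty, PEmpty, PEmpty.elim, PEmpty.elim⟩⟩

def neg : PGame → PGame
  | ⟨l, r, L, R⟩ => ⟨r, l, fun i => neg (R i), fun i => neg (L i)⟩

instance : Neg PGame :=
  ⟨neg⟩

noncomputable instance : Add PGame.{u} :=
  ⟨fun x y => by
    induction x generalizing y with | mk xl xr _ _ IHxl IHxr => _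
    induction y with | mk yl yr yL yR IHyl IHyr => _
    have y := mk yl yr yL yR
    refine ⟨xl ⊕ yl, xr ⊕ yr, Sum.rec ?_ ?_, Sum.rec ?_ ?_⟩
    · exact fun i => IHxl i y
    · exact IHyl
    · exact fun i => IHxr i y
    · exact IHyr⟩

end PGame

end SetTheory

open SetTheory

namespace Misere

/-- `F` is a follower of `G`: reachable from `G` by a (possibly empty) sequence of moves. -/
def Follower (F G : PGame) : Prop := Relation.ReflTransGen PGame.IsOption F G

def IsLeftEnd (G : PGame) : Prop := IsEmpty G.LeftMoves
def IsRightEnd (G : PGame) : Prop := IsEmpty G.RightMoves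

/-- A dead left end: every follower (including itself) is a left end. -/
def DeadLeftEnd (G : PGame) : Prop := ∀ F, Follower F G → IsLeftEnd F
def DeadRightEnd (G : PGame) : Prop := ∀ F, Follower F G → IsRightEnd F
def DeadEnd (G : PGame) : Prop := DeadLeftEnd G ∨ DeadRightEnd G

/-- A game is dead-ending if every end follower is a dead end. -/
def DeadEnding (G : PGame) : Prop :=
  ∀ F, Follower F G → (IsLeftEnd F → DeadLeftEnd F) ∧ (IsRightEnd F → DeadRightEnd F)

/-- The universe of dead-ending games. -/
def E : Set PGame := {G | DeadEnding G}

/-- `(misereWins G).1` : Left, moving first, wins `G` under misère play;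
    `(misereWins G).2` : Right, moving first, wins `G` under misère play. -/
def misereWins : PGame → Prop × Prop
  | PGame.mk l r L R =>
      (IsEmpty l ∨ ∃ i, ¬ (misereWins (L i)).2,
       IsEmpty r ∨ ∃ j, ¬ (misereWins (R j)).1)

def LeftWinsGF (G : PGame) : Prop := (misereWins G).1
def RightWinsGF (G : PGame) : Prop := (misereWins G).2

inductive MOutcome : Type
  | L | N | P | R
deriving DecidableEq

/-- Partial order on misère outcomes: `R` minimal, `L` maximal, `N` and `P` incomparable. -/
def MOutcome.le : MOutcome → MOutcome → Prop
  | .R, _ => True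
  | _, .L => True
  | a, b => a = b

instance : LE MOutcome := ⟨MOutcome.le⟩

/-- The misère outcome of a game. -/
noncomputable def outcome (G : PGame) : MOutcome := by
  classical
  exact if LeftWinsGF G then (if RightWinsGF G then .N else .L)
        else (if RightWinsGF G then .R else .P)

/-- `G ≡ H (mod U)`. -/
def equivMod (U : Set PGame) (G H : PGame) : Prop :=
  ∀ X ∈ U, outcome (G + X) = outcome (H + X)

/-- `G ≧ H (mod U)`. -/
def geMod (U : Set PGame) (G H : PGame) : Prop :=
  ∀ X ∈ U, outcome (H + X) ≤ outcome (G + X)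

/-- `LeftChain G n`: there is a sequence of `n` consecutive Left moves from `G`
ending at the zero position. -/
inductive LeftChain : PGame → ℕ → Prop
  | zero (G : PGame) : IsLeftEnd G → IsRightEnd G → LeftChain G 0
  | succ (G : PGame) (i : G.LeftMoves) (n : ℕ) :
      LeftChain (G.moveLeft i) n → LeftChain G (n + 1)

inductive RightChain : PGame → ℕ → Prop
  | zero (G : PGame) : IsLeftEnd G → IsRightEnd G → RightChain G 0
  | succ (G : PGame) (j : G.RightMoves) (n : ℕ) :
      RightChain (G.moveRight j) n → RightChain G (n + 1)

/-- Left-length: minimum number of consecutive Left moves needed to reach zero. -/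
noncomputable def leftLength (G : PGame) : ℕ := sInf {n | LeftChain G n}

/-- Right-length: minimum number of consecutive Right moves needed to reach zero. -/
noncomputable def rightLength (G : PGame) : ℕ := sInf {n | RightChain G n}

/-- Normal-play canonical form of a nonnegative integer. -/
def natGame : ℕ → PGame
  | 0 => 0
  | n + 1 => PGame.mk PUnit PEmpty (fun _ => natGame n) PEmpty.elim

/-- Normal-play canonical form of an integer (negatives are conjugates). -/
def intGame (n : ℤ) : PGame :=
  if 0 ≤ n then natGame n.toNat else -natGame (-n).toNat

/-- Normal-play canonical form of the dyadic rational `m / 2 ^ j`. -/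
def dyadicGame : ℤ → ℕ → PGame
  | m, 0 => intGame m
  | m, j + 1 =>
      if m % 2 = 0 then dyadicGame (m / 2) j
      else PGame.mk PUnit PUnit (fun _ => dyadicGame ((m - 1) / 2) j)
            (fun _ => dyadicGame ((m + 1) / 2) j)

/-- The closure of dead ends: finite disjunctive sums of dead ends. -/
def DeadEndClosure : Set PGame :=
  {G | ∃ l : List PGame, (∀ x ∈ l, DeadEnd x) ∧ G = l.sum}

end Misere
namespace Misere

/-- `fDy m j` computes the left-length of the canonical form of `m / 2^j` (for `m ≥ 0`). -/
def fDy : ℤ → ℕ → ℕ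
  | m, 0 => m.toNat
  | m, j+1 => if m % 2 = 0 then fDy (m/2) j else fDy ((m-1)/2) j + 1

lemma fDy_zero (m : ℤ) : fDy m 0 = m.toNat := rfl
lemma fDy_succ (m : ℤ) (j : ℕ) :
    fDy m (j+1) = if m % 2 = 0 then fDy (m/2) j else fDy ((m-1)/2) j + 1 := rfl

lemma fDy_lower : ∀ (j : ℕ) (m : ℤ), 1 ≤ m → m ≤ 2^j * (fDy m j : ℤ) := by
  intro j
  induction j with
  | zero => intro m hm; rw [fDy_zero]; simp only [pow_zero, one_mul]; omega
  | succ j ih =>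
    intro m hm
    rw [fDy_succ]
    by_cases h : m % 2 = 0
    · rw [if_pos h]
      have h1 : 1 ≤ m / 2 := by omega
      have h2 := ih (m/2) h1
      have h3 : m = 2 * (m/2) := by omega
      calc m = 2 * (m/2) := h3
        _ ≤ 2 * (2^j * (fDy (m/2) j : ℤ)) := by linarith
        _ = 2^(j+1) * (fDy (m/2) j : ℤ) := by ring
    · rw [if_neg h]
      have hone : (1:ℤ) ≤ 2^(j+1) := one_le_pow₀ (by norm_num)
      have epow : (2:ℤ)^(j+1) = 2 * 2^j := by ring
      have hF : (0:ℤ) ≤ (fDy ((m-1)/2) j : ℤ) := by positivity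
      have e : (2:ℤ)^(j+1) * ((fDy ((m-1)/2) j : ℤ) + 1)
          = 2 * (2^j * (fDy ((m-1)/2) j : ℤ)) + 2^(j+1) := by ring
      by_cases h1 : 1 ≤ (m-1)/2
      · have h2 := ih ((m-1)/2) h1
        have h3 : m = 2 * ((m-1)/2) + 1 := by omega
        push_cast
        linarith
      · have hm1 : m = 1 := by omega
        have hF2 : (0:ℤ) ≤ 2^j * (fDy ((m-1)/2) j : ℤ) := by positivity
        push_cast
        linarith

lemma lemA : ∀ (s ja jb : ℕ) (c mb : ℤ), ja + jb ≤ s → 0 ≤ c → 0 < mb →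
    c * 2^jb < mb * 2^ja → mb * 2^ja < (c+1) * 2^jb → fDy c ja < fDy mb jb := by
  intro s
  induction s with
  | zero =>
    intro ja jb c mb hs hc hmb h1 h2
    obtain ⟨rfl, rfl⟩ : ja = 0 ∧ jb = 0 := by omega
    simp only [pow_zero, mul_one] at h1 h2
    omega
  | succ s ih =>
    intro ja jb c mb hs hc hmb h1 h2
    match jb with
    | 0 =>
      simp only [pow_zero, mul_one] at h1 h2
      have h3 : c + 1 ≤ mb * 2^ja := Int.lt_iff_add_one_le.mp h1
      linarith
    | jb'+1 =>
      match ja with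
      | 0 =>
        simp only [pow_zero, mul_one] at h1 h2
        have hlow := fDy_lower (jb'+1) mb (by omega)
        have hp : (0:ℤ) < 2^(jb'+1) := by positivity
        have h3 : c * 2^(jb'+1) < (fDy mb (jb'+1) : ℤ) * 2^(jb'+1) := by
          calc c * 2^(jb'+1) < mb := h1
            _ ≤ 2^(jb'+1) * (fDy mb (jb'+1) : ℤ) := hlow
            _ = (fDy mb (jb'+1) : ℤ) * 2^(jb'+1) := by ring
        have h4 : c < (fDy mb (jb'+1) : ℤ) := lt_of_mul_lt_mul_right h3 hp.le
        rw [fDy_zero]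
        omega
      | ja'+1 =>
        by_cases hmb2 : mb % 2 = 0
        · -- mb even: halve mb and jb
          obtain ⟨q, rfl⟩ : ∃ q, mb = 2 * q := ⟨mb/2, by omega⟩
          have hgr : fDy (2*q) (jb'+1) = fDy q jb' := by
            rw [fDy_succ, if_pos (by omega), show (2*q)/2 = q by omega]
          rw [hgr]
          apply ih (ja'+1) jb' c q (by omega) hc (by omega)
          · have e1 : c * 2^(jb'+1) = 2 * (c * 2^jb') := by ring
            have e2 : (2*q) * 2^(ja'+1) = 2 * (q * 2^(ja'+1)) := by ring
            linarith
          · have e1 : (c+1) * 2^(jb'+1) = 2 * ((c+1) * 2^jb') := by ring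
            have e2 : (2*q) * 2^(ja'+1) = 2 * (q * 2^(ja'+1)) := by ring
            linarith
        · -- mb odd
          obtain ⟨q, rfl⟩ : ∃ q, mb = 2 * q + 1 := ⟨(mb-1)/2, by omega⟩
          have hgr : fDy (2*q+1) (jb'+1) = fDy q jb' + 1 := by
            rw [fDy_succ, if_neg (by omega), show (2*q+1-1)/2 = q by omega]
          rw [hgr]
          by_cases hc2 : c % 2 = 0
          · -- c even: halve c and ja
            obtain ⟨p, rfl⟩ : ∃ p, c = 2 * p := ⟨c/2, by omega⟩
            have hgl : fDy (2*p) (ja'+1) = fDy p ja' := by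
              rw [fDy_succ, if_pos (by omega), show (2*p)/2 = p by omega]
            rw [hgl, ← hgr]
            apply ih ja' (jb'+1) p (2*q+1) (by omega) (by omega) hmb
            · have e1 : (2*p) * 2^(jb'+1) = 2 * (p * 2^(jb'+1)) := by ring
              have e2 : (2*q+1) * 2^(ja'+1) = 2 * ((2*q+1) * 2^ja') := by ring
              linarith
            · have e2 : (2*q+1) * 2^(ja'+1) = 2 * ((2*q+1) * 2^ja') := by ring
              have hp : (0:ℤ) < 2^(jb'+1) := by positivity
              have e3 : (2*p+1) * 2^(jb'+1) + 2^(jb'+1) = 2 * ((p+1) * 2^(jb'+1)) := by ring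
              linarith
          · -- c odd, mb odd
            obtain ⟨p, rfl⟩ : ∃ p, c = 2 * p + 1 := ⟨(c-1)/2, by omega⟩
            have hgl : fDy (2*p+1) (ja'+1) = fDy p ja' + 1 := by
              rw [fDy_succ, if_neg (by omega), show (2*p+1-1)/2 = p by omega]
            rw [hgl]
            have hc' : 0 ≤ p := by omega
            -- first: ja' ≤ jb'
            have hle : ja' ≤ jb' := by
              by_contra hgt
              push_neg at hgt
              have hd : 2^(ja'+1) = 2^(ja'-jb') * (2:ℤ)^(jb'+1) := by
                rw [← pow_add]; congr 1; omega
              have hp : (0:ℤ) < 2^(jb'+1) := by positivity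
              have k1 : (2*p+1) < (2*q+1) * 2^(ja'-jb') := by
                have hk : (2*p+1) * 2^(jb'+1) < ((2*q+1) * 2^(ja'-jb')) * 2^(jb'+1) := by
                  rw [mul_assoc, ← hd]; exact h1
                exact lt_of_mul_lt_mul_right hk hp.le
              have k2 : (2*q+1) * 2^(ja'-jb') < (2*p+1) + 1 := by
                have hk : ((2*q+1) * 2^(ja'-jb')) * 2^(jb'+1) < ((2*p+1)+1) * 2^(jb'+1) := by
                  rw [mul_assoc, ← hd]; exact h2
                exact lt_of_mul_lt_mul_right hk hp.le
              have k3 := Int.lt_iff_add_one_le.mp k1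
              linarith
            have hpow : (2:ℤ)^ja' ≤ 2^jb' := pow_le_pow_right₀ (by norm_num) hle
            have hpja : (0:ℤ) < 2^ja' := by positivity
            have hpjb : (0:ℤ) < 2^jb' := by positivity
            have e1 : (2*p+1) * 2^(jb'+1) = 4 * (p * 2^jb') + 2 * 2^jb' := by ring
            have e2 : (2*q+1) * 2^(ja'+1) = 4 * (q * 2^ja') + 2 * 2^ja' := by ring
            have e3 : ((2*p+1)+1) * 2^(jb'+1) = 4 * ((p+1) * 2^jb') := by ring
            have A : p * 2^jb' < q * 2^ja' := by linarith
            have B : q * 2^ja' < (p+1) * 2^jb' := by linarith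
            have hmbp : 0 < q := by
              by_contra hq0
              push_neg at hq0
              have t1 : q * 2^ja' ≤ 0 := mul_nonpos_of_nonpos_of_nonneg hq0 hpja.le
              have t2 : (0:ℤ) ≤ p * 2^jb' := mul_nonneg hc' hpjb.le
              linarith
            have := ih ja' jb' p q (by omega) hc' hmbp A B
            omega

/-- Compute `leftLength` from a unique-chain characterization. -/
lemma leftLength_eq_of_iff {G : PGame} {k : ℕ} (h : ∀ n, LeftChain G n ↔ n = k) :
    leftLength G = k := by
  unfold leftLength
  have hs : {n | LeftChain G n} = {k} := by ext n; simp [h n]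
  rw [hs, csInf_singleton]

lemma natGame_chain : ∀ (k n : ℕ), LeftChain (natGame k) n ↔ n = k := by
  intro k
  induction k with
  | zero =>
    intro n
    constructor
    · intro h
      cases h with
      | zero _ _ _ => rfl
      | succ _ i _ _ => exact isEmptyElim (show PEmpty from i)
    · rintro rfl
      exact LeftChain.zero _ ⟨fun i => (show PEmpty from i).elim⟩ ⟨fun i => (show PEmpty from i).elim⟩
  | succ k ihk =>
    intro n
    constructor
    · intro h
      cases h with
      | zero _ hL _ => exact ((show IsEmpty PUnit from hL).false PUnit.unit).elim
      | succ _ i n' h' =>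
        have := (ihk n').mp h'
        omega
    · rintro rfl
      exact LeftChain.succ _ (by exact PUnit.unit) k ((ihk k).mpr rfl)

lemma dyadic_chain : ∀ (j : ℕ) (m : ℤ), 0 ≤ m → ∀ n,
    LeftChain (dyadicGame m j) n ↔ n = fDy m j := by
  intro j
  induction j with
  | zero =>
    intro m hm n
    have hg : dyadicGame m 0 = natGame m.toNat := by simp [dyadicGame, intGame, hm]
    rw [hg, fDy_zero]
    exact natGame_chain m.toNat n
  | succ j ihj =>
    intro m hm n
    by_cases h2 : m % 2 = 0
    · have hg : dyadicGame m (j+1) = dyadicGame (m/2) j := by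
        simp [dyadicGame, h2]
      rw [hg, fDy_succ, if_pos h2]
      exact ihj _ (by omega) n
    · have hg : dyadicGame m (j+1) = PGame.mk PUnit PUnit
          (fun _ => dyadicGame ((m-1)/2) j) (fun _ => dyadicGame ((m+1)/2) j) := by
        simp [dyadicGame, h2]
      rw [hg, fDy_succ, if_neg h2]
      constructor
      · intro h
        cases h with
        | zero _ hL _ => exact ((show IsEmpty PUnit from hL).false PUnit.unit).elim
        | succ _ i n' h' =>
          have := (ihj ((m-1)/2) (by omega) n').mp h'
          omega
      · rintro rfl
        exact LeftChain.succ _ (by exact PUnit.unit) _ ((ihj ((m-1)/2) (by omega) _).mpr rfl)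

lemma moveLeft_len (m : ℤ) (j : ℕ) (hm : 0 < m) (hr : Odd m ∨ j = 0) :
    ∀ il : (dyadicGame m j).LeftMoves,
      leftLength ((dyadicGame m j).moveLeft il) = fDy (m-1) j := by
  cases j with
  | zero =>
    have hg : dyadicGame m 0 = natGame ((m-1).toNat + 1) := by
      rw [show dyadicGame m 0 = intGame m from rfl]
      unfold intGame
      rw [if_pos hm.le]
      congr 1
      omega
    rw [hg]
    intro il
    have he : (natGame ((m-1).toNat + 1)).moveLeft il = natGame ((m-1).toNat) := rfl
    rw [he, fDy_zero]
    exact leftLength_eq_of_iff (natGame_chain _)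
  | succ j =>
    have hodd : m % 2 = 1 := by
      rcases hr with ⟨t, ht⟩ | h
      · omega
      · exact absurd h (Nat.succ_ne_zero j)
    have hg : dyadicGame m (j+1) = PGame.mk PUnit PUnit
        (fun _ => dyadicGame ((m-1)/2) j) (fun _ => dyadicGame ((m+1)/2) j) := by
      simp [dyadicGame]; omega
    rw [hg]
    intro il
    have he : (PGame.mk PUnit PUnit
        (fun _ => dyadicGame ((m-1)/2) j) (fun _ => dyadicGame ((m+1)/2) j)).moveLeft il
        = dyadicGame ((m-1)/2) j := rfl
    rw [he]
    have hf : fDy (m-1) (j+1) = fDy ((m-1)/2) j := by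
      rw [fDy_succ, if_pos (by omega)]
    rw [hf]
    exact leftLength_eq_of_iff (dyadic_chain j _ (by omega))

end Misere

open Misere SetTheory PGame

/-- if a and b are positive canonical dyadics with a^L < b < a
(as rationals), then l(a^L) < l(b). -/
theorem stmt16 (ma mb : ℤ) (ja jb : ℕ) (hma : 0 < ma) (hmb : 0 < mb)
    (hra : Odd ma ∨ ja = 0) (hrb : Odd mb ∨ jb = 0)
    (h1 : ((ma : ℚ) - 1) / 2 ^ ja < (mb : ℚ) / 2 ^ jb)
    (h2 : (mb : ℚ) / 2 ^ jb < (ma : ℚ) / 2 ^ ja) :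
    ∀ il : (dyadicGame ma ja).LeftMoves,
      leftLength ((dyadicGame ma ja).moveLeft il) < leftLength (dyadicGame mb jb) := by

  intro il
  have hpa : (0:ℚ) < 2^ja := by positivity
  have hpb : (0:ℚ) < 2^jb := by positivity
  rw [div_lt_div_iff₀ hpa hpb] at h1
  rw [div_lt_div_iff₀ hpb hpa] at h2
  have H1 : (ma-1) * 2^jb < mb * 2^ja := by exact_mod_cast h1
  have H2 : mb * 2^ja < ((ma-1)+1) * 2^jb := by
    have hma' : ((ma:ℤ)-1)+1 = ma := by ring
    rw [hma']; exact_mod_cast h2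
  have key : fDy (ma-1) ja < fDy mb jb :=
    lemA (ja+jb) ja jb (ma-1) mb le_rfl (by omega) hmb H1 H2
  have hb : leftLength (dyadicGame mb jb) = fDy mb jb :=
    leftLength_eq_of_iff (dyadic_chain jb mb (by omega))
  have ha := moveLeft_len ma ja hma hra il
  omega
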